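/- Let H be a definite quaternion algebra over Q, O ⊂ H an order over Z, p a prime, and O[1/p] = O ⊗_Z Z[1/p]. An element α ∈ O[1/p] is a unit of O[1/p] if and only if its reduced norm Nm(α) equals p^s for some integer s ∈ Z. Moreover, the subgroup O[1/p]×₊ = {α ∈ O[1/p]× : v_p(Nm(α)) ≡ 0 (mod 2)} has index 2 in O[1/p]×. -/

import Mathlib

set_option synthInstance.maxHeartbeats 1000000
set_option maxHeartbeats 1000000

open scoped Quaternion

/-- The reduced norm of an element of the quaternion algebra `(a,b/ℚ)`. -/
def qnorm (a b : ℚ) (x : ℍ[ℚ,a,b]) : ℚ := (x * star x).re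

/-- The localized order `O[1/p] = O ⊗ ℤ[1/p]`, realized inside the quaternion algebra as the
set of elements that land in `O` after multiplication by a power of `p`. -/
def Olp (a b : ℚ) (O : Subalgebra ℤ ℍ[ℚ,a,b]) (p : ℕ) : Set ℍ[ℚ,a,b] :=
  {x | ∃ n : ℕ, (p : ℍ[ℚ,a,b]) ^ n * x ∈ O}

namespace QAux13
open Polynomial QuaternionAlgebra

variable {a b : ℚ}

theorem qnorm_eq (x : ℍ[ℚ,a,b]) :
    qnorm a b x = x.re^2 - a*x.imI^2 - b*x.imJ^2 + a*b*x.imK^2 := by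
  simp only [qnorm, re_mul, re_star, imI_star, imJ_star, imK_star]
  ring

theorem mul_star_eq (x : ℍ[ℚ,a,b]) : x * star x = (↑(qnorm a b x) : ℍ[ℚ,a,b]) :=
  x.mul_star_eq_coe

theorem star_mul_eq (x : ℍ[ℚ,a,b]) : star x * x = (↑(qnorm a b x) : ℍ[ℚ,a,b]) := by
  rw [star_comm_self']
  exact mul_star_eq x

theorem qnorm_mul (x y : ℍ[ℚ,a,b]) : qnorm a b (x*y) = qnorm a b x * qnorm a b y := by
  have h : (x*y) * star (x*y) = (↑(qnorm a b x * qnorm a b y) : ℍ[ℚ,a,b]) := by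
    rw [star_mul, mul_assoc, ← mul_assoc y, mul_star_eq y, coe_commutes, ← mul_assoc,
      mul_star_eq x, ← coe_mul]
  have h2 := congrArg QuaternionAlgebra.re h
  simpa [qnorm] using h2

theorem qnorm_coe (c : ℚ) : qnorm a b (↑c : ℍ[ℚ,a,b]) = c^2 := by
  rw [qnorm, star_coe, ← coe_mul, re_coe, sq]

theorem qnorm_one : qnorm a b (1 : ℍ[ℚ,a,b]) = 1 := by
  simpa using qnorm_coe (a := a) (b := b) 1

theorem qnorm_pos (ha : a < 0) (hb : b < 0) {x : ℍ[ℚ,a,b]} (hx : x ≠ 0) :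
    0 < qnorm a b x := by
  have h1 : 0 ≤ -a * x.imI^2 := mul_nonneg (by linarith) (sq_nonneg _)
  have h2 : 0 ≤ -b * x.imJ^2 := mul_nonneg (by linarith) (sq_nonneg _)
  have h3 : 0 ≤ a*b * x.imK^2 := mul_nonneg (by nlinarith) (sq_nonneg _)
  have h0 : 0 ≤ x.re^2 := sq_nonneg _
  rcases lt_or_ge 0 (qnorm a b x) with h | h
  · exact h
  · exfalso
    rw [qnorm_eq] at h
    apply hx
    have e0 : x.re^2 = 0 := le_antisymm (by linarith) h0
    have e1 : -a * x.imI^2 = 0 := le_antisymm (by linarith) h1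
    have e2 : -b * x.imJ^2 = 0 := le_antisymm (by linarith) h2
    have e3 : a*b * x.imK^2 = 0 := le_antisymm (by linarith) h3
    have hre : x.re = 0 := by
      simpa [sq_eq_zero_iff] using e0
    have hI : x.imI = 0 := by
      rcases mul_eq_zero.mp e1 with h' | h'
      · exact absurd h' (by linarith)
      · simpa [sq_eq_zero_iff] using h'
    have hJ : x.imJ = 0 := by
      rcases mul_eq_zero.mp e2 with h' | h'
      · exact absurd h' (by linarith)
      · simpa [sq_eq_zero_iff] using h'
    have hK : x.imK = 0 := by
      rcases mul_eq_zero.mp e3 with h' | h'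
      · exact absurd h' (by nlinarith)
      · simpa [sq_eq_zero_iff] using h'
    ext <;> simp [hre, hI, hJ, hK]

theorem cast_pow_eq (p : ℕ) (k : ℕ) :
    ((p : ℍ[ℚ,a,b]))^k = (↑((p:ℚ)^k) : ℍ[ℚ,a,b]) := by
  rw [coe_pow, coe_natCast]

theorem qnorm_pow_mul (p : ℕ) (k : ℕ) (x : ℍ[ℚ,a,b]) :
    qnorm a b ((p : ℍ[ℚ,a,b])^k * x) = (p:ℚ)^(2*k) * qnorm a b x := by
  rw [cast_pow_eq, qnorm_mul, qnorm_coe, ← pow_mul, mul_comm k 2]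

theorem star_isIntegral {x : ℍ[ℚ,a,b]} (h : IsIntegral ℤ x) : IsIntegral ℤ (star x) := by
  obtain ⟨g, gm, hg⟩ := h
  have key : ∀ q : ℤ[X], Polynomial.eval₂ (algebraMap ℤ ℍ[ℚ,a,b]) (star x) q
      = star (Polynomial.eval₂ (algebraMap ℤ ℍ[ℚ,a,b]) x q) := by
    intro q
    induction q using Polynomial.induction_on' with
    | add r s hr hs => simp only [Polynomial.eval₂_add, hr, hs, star_add]
    | monomial n c =>
      rw [Polynomial.eval₂_monomial, Polynomial.eval₂_monomial, star_mul, star_pow]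
      have hst : star (algebraMap ℤ ℍ[ℚ,a,b] c) = algebraMap ℤ ℍ[ℚ,a,b] c := by
        rw [algebraMap_int_eq]
        exact star_intCast c
      rw [hst]
      exact Algebra.commutes c (star x ^ n)
  have h2 : Polynomial.eval₂ (algebraMap ℤ ℍ[ℚ,a,b]) (star x) g = 0 := by
    rw [key g, hg, star_zero]
  exact ⟨g, gm, h2⟩

theorem exists_int_trace_norm (O : Subalgebra ℤ ℍ[ℚ,a,b]) [Module.Free ℤ O]
    (hrank : Module.finrank ℤ O = 4) {γ : ℍ[ℚ,a,b]} (hγ : γ ∈ O) :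
    (∃ T : ℤ, (T:ℚ) = 2*γ.re) ∧ (∃ N : ℤ, (N:ℚ) = qnorm a b γ) := by
  haveI : Module.Finite ℤ O := Module.finite_of_finrank_pos (by rw [hrank]; norm_num)
  have hint : IsIntegral ℤ γ := by
    have h0 : IsIntegral ℤ (⟨γ, hγ⟩ : O) := IsIntegral.of_finite ℤ _
    exact h0.map O.val
  have hstar : IsIntegral ℤ (star γ) := star_isIntegral hint
  have hcomm : ∀ x ∈ ({γ, star γ} : Set ℍ[ℚ,a,b]), ∀ y ∈ ({γ, star γ} : Set ℍ[ℚ,a,b]),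
      x*y = y*x := by
    have hc : γ * star γ = star γ * γ := (star_comm_self' γ).symm
    intro x hx y hy
    simp only [Set.mem_insert_iff, Set.mem_singleton_iff] at hx hy
    rcases hx with h1 | h1 <;> rcases hy with h2 | h2 <;> rw [h1, h2]
    · exact hc
    · exact hc.symm
  letI : CommRing (Algebra.adjoin ℤ ({γ, star γ} : Set ℍ[ℚ,a,b])) :=
    Algebra.adjoinCommRingOfComm ℤ hcomm
  have hγC : γ ∈ Algebra.adjoin ℤ ({γ, star γ} : Set ℍ[ℚ,a,b]) :=
    Algebra.subset_adjoin (Set.mem_insert _ _)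
  have hsC : star γ ∈ Algebra.adjoin ℤ ({γ, star γ} : Set ℍ[ℚ,a,b]) :=
    Algebra.subset_adjoin (Set.mem_insert_of_mem _ rfl)
  have i1 : IsIntegral ℤ (⟨γ, hγC⟩ : Algebra.adjoin ℤ ({γ, star γ} : Set ℍ[ℚ,a,b])) :=
    (isIntegral_algHom_iff (Algebra.adjoin ℤ ({γ, star γ} : Set ℍ[ℚ,a,b])).val
      Subtype.val_injective).mp
      (show IsIntegral ℤ ((Algebra.adjoin ℤ ({γ, star γ} : Set ℍ[ℚ,a,b])).val ⟨γ, hγC⟩) from hint)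
  have i2 : IsIntegral ℤ (⟨star γ, hsC⟩ : Algebra.adjoin ℤ ({γ, star γ} : Set ℍ[ℚ,a,b])) :=
    (isIntegral_algHom_iff (Algebra.adjoin ℤ ({γ, star γ} : Set ℍ[ℚ,a,b])).val
      Subtype.val_injective).mp
      (show IsIntegral ℤ ((Algebra.adjoin ℤ ({γ, star γ} : Set ℍ[ℚ,a,b])).val ⟨star γ, hsC⟩)
        from hstar)
  have hsum : IsIntegral ℤ (γ + star γ) := by
    have := (i1.add i2).map (Algebra.adjoin ℤ ({γ, star γ} : Set ℍ[ℚ,a,b])).val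
    exact this
  have hprod : IsIntegral ℤ (γ * star γ) := by
    have := (i1.mul i2).map (Algebra.adjoin ℤ ({γ, star γ} : Set ℍ[ℚ,a,b])).val
    exact this
  have inj : Function.Injective ((Algebra.ofId ℚ ℍ[ℚ,a,b]).restrictScalars ℤ) := by
    intro u v huv
    exact coe_injective huv
  constructor
  · have hTQ : IsIntegral ℤ ((2*γ.re : ℚ)) := by
      refine (isIntegral_algHom_iff ((Algebra.ofId ℚ ℍ[ℚ,a,b]).restrictScalars ℤ) inj).mp ?_
      show IsIntegral ℤ ((↑(2*γ.re) : ℍ[ℚ,a,b]))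
      rw [show 2*γ.re = 2*γ.re + 0*γ.imI by ring, ← self_add_star']
      exact hsum
    obtain ⟨T, hT⟩ := IsIntegrallyClosed.isIntegral_iff.mp hTQ
    exact ⟨T, by rw [← hT]; simp⟩
  · have hNQ : IsIntegral ℤ (qnorm a b γ) := by
      refine (isIntegral_algHom_iff ((Algebra.ofId ℚ ℍ[ℚ,a,b]).restrictScalars ℤ) inj).mp ?_
      show IsIntegral ℤ ((↑(qnorm a b γ) : ℍ[ℚ,a,b]))
      rw [← mul_star_eq]
      exact hprod
    obtain ⟨N, hN⟩ := IsIntegrallyClosed.isIntegral_iff.mp hNQ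
    exact ⟨N, by rw [← hN]; simp⟩

theorem star_mem (O : Subalgebra ℤ ℍ[ℚ,a,b]) [Module.Free ℤ O]
    (hrank : Module.finrank ℤ O = 4) {y : ℍ[ℚ,a,b]} (hy : y ∈ O) : star y ∈ O := by
  obtain ⟨⟨T, hT⟩, -⟩ := exists_int_trace_norm O hrank hy
  rw [star_eq_two_re_sub, zero_mul, add_zero]
  have h2 : (↑(2*y.re) : ℍ[ℚ,a,b]) ∈ O := by
    rw [← hT, coe_intCast]
    exact intCast_mem O T
  exact sub_mem h2 hy

end QAux13
open QuaternionAlgebra QAux13 in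
theorem stmt_13 (a b : ℚ) (ha : a < 0) (hb : b < 0) (O : Subalgebra ℤ ℍ[ℚ,a,b])
    [Module.Free ℤ O] (hrank : Module.finrank ℤ O = 4) (p : ℕ) (hp : p.Prime) :
    (∀ α ∈ Olp a b O p,
      ((∃ β ∈ Olp a b O p, α * β = 1 ∧ β * α = 1) ↔ ∃ s : ℤ, qnorm a b α = (p : ℚ) ^ s)) ∧
    ((∃ γ ∈ O, qnorm a b γ = (p : ℚ)) →
      (∃ α ∈ Olp a b O p, (∃ β ∈ Olp a b O p, α * β = 1 ∧ β * α = 1) ∧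
          ¬ ∃ s : ℤ, qnorm a b α = (p : ℚ) ^ (2 * s)) ∧
      (∀ α β : ℍ[ℚ,a,b], α ∈ Olp a b O p → β ∈ Olp a b O p →
        (∃ α' ∈ Olp a b O p, α * α' = 1 ∧ α' * α = 1) →
        (∃ β' ∈ Olp a b O p, β * β' = 1 ∧ β' * β = 1) →
        (¬ ∃ s : ℤ, qnorm a b α = (p : ℚ) ^ (2 * s)) →
        (¬ ∃ s : ℤ, qnorm a b β = (p : ℚ) ^ (2 * s)) →
        ∃ s : ℤ, qnorm a b (α * β) = (p : ℚ) ^ (2 * s))) := by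
  have hppos : (0:ℚ) < (p:ℚ) := by exact_mod_cast hp.pos
  have hp0 : (p:ℚ) ≠ 0 := ne_of_gt hppos
  have hp1 : (1:ℚ) < (p:ℚ) := by exact_mod_cast hp.one_lt
  have key : ∀ α ∈ Olp a b O p,
      ((∃ β ∈ Olp a b O p, α * β = 1 ∧ β * α = 1) ↔ ∃ s : ℤ, qnorm a b α = (p : ℚ) ^ s) := by
    intro α hα
    obtain ⟨n, hn⟩ := hα
    constructor
    · rintro ⟨β, ⟨m, hm⟩, hαβ, hβα⟩
      have hα0 : α ≠ 0 := by rintro rfl; simp at hαβ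
      have hβ0 : β ≠ 0 := by rintro rfl; simp at hαβ
      obtain ⟨-, N1, hN1⟩ := exists_int_trace_norm O hrank hn
      obtain ⟨-, N2, hN2⟩ := exists_int_trace_norm O hrank hm
      rw [qnorm_pow_mul] at hN1 hN2
      have emul : qnorm a b α * qnorm a b β = 1 := by
        rw [← qnorm_mul, hαβ, qnorm_one]
      have h12 : (N1:ℚ) * (N2:ℚ) = (p:ℚ)^(2*n+2*m) := by
        rw [hN1, hN2, pow_add]
        calc (p:ℚ)^(2*n) * qnorm a b α * ((p:ℚ)^(2*m) * qnorm a b β)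
            = (p:ℚ)^(2*n) * (p:ℚ)^(2*m) * (qnorm a b α * qnorm a b β) := by ring
          _ = (p:ℚ)^(2*n) * (p:ℚ)^(2*m) := by rw [emul, mul_one]
      have eN : N1 * N2 = (p:ℤ)^(2*n+2*m) := by exact_mod_cast h12
      have hq1pos : 0 < qnorm a b α := qnorm_pos ha hb hα0
      have hN1pos : 0 < (N1:ℚ) := by
        rw [hN1]; exact mul_pos (pow_pos hppos _) hq1pos
      have hN1pos' : 0 < N1 := by exact_mod_cast hN1pos
      have hdvd : N1 ∣ (p:ℤ)^(2*n+2*m) := ⟨N2, eN.symm⟩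
      have hdvd' : N1.natAbs ∣ p^(2*n+2*m) := by
        have h' := Int.natAbs_dvd_natAbs.mpr hdvd
        simpa [Int.natAbs_pow] using h'
      obtain ⟨j, hj, hjeq⟩ := (Nat.dvd_prime_pow hp).mp hdvd'
      have hN1j : (N1:ℚ) = (p:ℚ)^j := by
        have h' : N1 = (p:ℤ)^j := by
          have h'' := Int.natAbs_of_nonneg hN1pos'.le
          rw [← h'', hjeq]; push_cast; ring
        exact_mod_cast h'
      refine ⟨(j:ℤ) - 2*(n:ℤ), ?_⟩
      have hcalc : (p:ℚ)^(2*n) * (p:ℚ)^((j:ℤ) - 2*(n:ℤ)) = (p:ℚ)^j := by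
        rw [← zpow_natCast (p:ℚ) (2*n), ← zpow_add₀ hp0, ← zpow_natCast (p:ℚ) j]
        congr 1; push_cast; ring
      have hpn : (p:ℚ)^(2*n) ≠ 0 := pow_ne_zero _ hp0
      apply mul_left_cancel₀ hpn
      rw [hcalc, ← hN1j]
      exact hN1.symm
    · rintro ⟨s, hs⟩
      have hα0 : α ≠ 0 := by
        intro h
        rw [h] at hs
        have h0 : (0:ℚ) = (p:ℚ)^s := by simpa [qnorm_eq] using hs
        exact (zpow_ne_zero s hp0) h0.symm
      have hsα : (p:ℍ[ℚ,a,b])^n * star α ∈ O := by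
        have h1 : star ((p:ℍ[ℚ,a,b])^n * α) ∈ O := star_mem O hrank hn
        have h2 : star ((p:ℍ[ℚ,a,b])^n * α) = (p:ℍ[ℚ,a,b])^n * star α := by
          rw [star_mul, star_pow, star_natCast]
          exact ((Nat.cast_commute p (star α)).pow_left n).eq.symm
        rwa [h2] at h1
      refine ⟨(↑((p:ℚ)^(-s)) : ℍ[ℚ,a,b]) * star α, ⟨n + s.toNat, ?_⟩, ?_, ?_⟩
      · set d : ℕ := ((s.toNat : ℤ) - s).toNat with hd
        have hdz : (d:ℤ) = (s.toNat:ℤ) - s := by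
          rw [hd]; rw [Int.toNat_of_nonneg]; omega
        have hsc : ((p:ℚ)^((n + s.toNat : ℕ)) * (p:ℚ)^(-s)) = (p:ℚ)^((d + n : ℕ)) := by
          rw [← zpow_natCast (p:ℚ) (n + s.toNat), ← zpow_add₀ hp0,
            ← zpow_natCast (p:ℚ) (d + n)]
          congr 1
          push_cast
          omega
        have heq : (p:ℍ[ℚ,a,b])^(n + s.toNat) * ((↑((p:ℚ)^(-s)) : ℍ[ℚ,a,b]) * star α)
            = (p:ℍ[ℚ,a,b])^d * ((p:ℍ[ℚ,a,b])^n * star α) := by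
          rw [cast_pow_eq, ← mul_assoc, ← coe_mul, hsc, ← cast_pow_eq, pow_add, mul_assoc]
        rw [heq]
        exact mul_mem (pow_mem (natCast_mem O p) d) hsα
      · calc α * ((↑((p:ℚ)^(-s)) : ℍ[ℚ,a,b]) * star α)
            = (α * star α) * (↑((p:ℚ)^(-s)) : ℍ[ℚ,a,b]) := by
              rw [coe_commutes, ← mul_assoc]
          _ = (↑(qnorm a b α * (p:ℚ)^(-s)) : ℍ[ℚ,a,b]) := by
              rw [mul_star_eq, ← coe_mul]
          _ = 1 := by
              rw [hs, ← zpow_add₀ hp0, add_neg_cancel, zpow_zero, coe_one]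
      · calc (↑((p:ℚ)^(-s)) : ℍ[ℚ,a,b]) * star α * α
            = (↑((p:ℚ)^(-s)) : ℍ[ℚ,a,b]) * (star α * α) := by rw [mul_assoc]
          _ = (↑((p:ℚ)^(-s) * qnorm a b α) : ℍ[ℚ,a,b]) := by
              rw [star_mul_eq, ← coe_mul]
          _ = 1 := by
              rw [hs, ← zpow_add₀ hp0, neg_add_cancel, zpow_zero, coe_one]
  refine ⟨key, ?_⟩
  rintro ⟨γ, hγO, hγn⟩
  have hγmem : γ ∈ Olp a b O p := ⟨0, by simpa using hγO⟩
  constructor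
  · refine ⟨γ, hγmem, (key γ hγmem).mpr ⟨1, by rw [hγn, zpow_one]⟩, ?_⟩
    rintro ⟨s, hs⟩
    rw [hγn] at hs
    have h1 : (p:ℚ)^(1:ℤ) = (p:ℚ)^(2*s) := by rw [zpow_one]; exact hs
    have h2 := zpow_right_injective₀ hppos (ne_of_gt hp1) h1
    omega
  · intro α β hα hβ huα huβ hnα hnβ
    obtain ⟨s, hsα⟩ := (key α hα).mp huα
    obtain ⟨t, hsβ⟩ := (key β hβ).mp huβ
    have hos : Odd s := by
      rcases Int.even_or_odd s with he | ho
      · obtain ⟨u, hu⟩ := he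
        exact absurd ⟨u, by rw [hsα]; congr 1; omega⟩ hnα
      · exact ho
    have hot : Odd t := by
      rcases Int.even_or_odd t with he | ho
      · obtain ⟨u, hu⟩ := he
        exact absurd ⟨u, by rw [hsβ]; congr 1; omega⟩ hnβ
      · exact ho
    obtain ⟨u, hu⟩ := hos.add_odd hot
    refine ⟨u, ?_⟩
    rw [qnorm_mul, hsα, hsβ, ← zpow_add₀ hp0]
    congr 1
    omega
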